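/- Let p ≠ 2 be a prime with p ≡ 2 or 3 (mod 5) such that ν_p(F_{α(p)}) = 1. Then for all integers n ≥ 0: for each i with 0 ≤ i ≤ p − 2, ν_p(F_{p(pn+i)+p}) = 2·ν_p(F_{pn+i+1}); and ν_p(F_{p²(n+1)}) + ν_p(F_{n+1}) = 2·ν_p(F_{p(n+1)}). -/

import Mathlib

open Nat Finset

open Nat Finset Matrix

def fibN : Matrix (Fin 2) (Fin 2) ℕ := !![1,1;1,0]

theorem fibN_pow (n : ℕ) : fibN ^ (n+1) = !![Nat.fib (n+2), Nat.fib (n+1); Nat.fib (n+1), Nat.fib n] := by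
  induction n with
  | zero => simp [fibN]
  | succ n ih =>
      rw [pow_succ, ih]
      ext i j
      fin_cases i <;> fin_cases j <;>
        simp [fibN, Matrix.mul_apply, Fin.sum_univ_two, Nat.fib_add_two] <;> omega

theorem fibN_pow_01 (n : ℕ) : (fibN ^ n) 0 1 = Nat.fib n := by
  cases n with
  | zero => simp
  | succ n => rw [fibN_pow]; simp

theorem fibN_pow_succ_eq (m : ℕ) :
    fibN ^ (m+1) = Nat.fib (m+1) • fibN + Nat.fib m • (1 : Matrix (Fin 2) (Fin 2) ℕ) := by
  rw [fibN_pow, Nat.fib_add_two]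
  ext i j
  fin_cases i <;> fin_cases j <;>
    simp [fibN, Matrix.smul_apply, ← Matrix.diagonal_natCast, Matrix.diagonal_apply,
      Matrix.add_apply] <;> omega

theorem fib_mul_expand (m k : ℕ) :
    Nat.fib (k * (m+1)) = ∑ j ∈ Finset.range (k+1),
      k.choose j * (Nat.fib (m+1))^j * (Nat.fib m)^(k-j) * Nat.fib j := by
  have h1 : fibN ^ (k * (m+1)) = (Nat.fib (m+1) • fibN + Nat.fib m • (1 : Matrix (Fin 2) (Fin 2) ℕ)) ^ k := by
    rw [← fibN_pow_succ_eq, ← pow_mul, mul_comm (m+1) k]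
  have hcomm : Commute (Nat.fib (m+1) • fibN) (Nat.fib m • (1 : Matrix (Fin 2) (Fin 2) ℕ)) :=
    (Commute.one_right (Nat.fib (m+1) • fibN)).smul_right (Nat.fib m)
  rw [hcomm.add_pow] at h1
  have h2 := congrFun (congrFun h1 0) 1
  rw [fibN_pow_01] at h2
  rw [h2, Matrix.sum_apply]
  refine Finset.sum_congr rfl fun j hj => ?_
  rw [smul_pow, smul_pow, one_pow, smul_mul_smul_comm, mul_one, ← Matrix.diagonal_natCast]
  simp only [Matrix.mul_diagonal, Matrix.smul_apply, smul_eq_mul, fibN_pow_01, Nat.cast_id]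
  ring

theorem fib_lte {p : ℕ} [hp : Fact p.Prime] (hp2 : p ≠ 2) (m : ℕ)
    (hdvd : p ∣ Nat.fib (m+1)) :
    padicValNat p (Nat.fib (p * (m+1))) = padicValNat p (Nat.fib (m+1)) + 1 := by
  have hpp := hp.out
  have hp3 : 3 ≤ p := by
    have h2 := hpp.two_le
    by_contra h
    interval_cases p <;> simp_all
  set a := Nat.fib (m+1) with ha_def
  set b := Nat.fib m with hb_def
  set v := padicValNat p a with hv_def
  have ha0 : a ≠ 0 := by have := Nat.fib_pos.mpr (by omega : 0 < m+1); omega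
  have hv1 : 1 ≤ v := one_le_padicValNat_of_dvd ha0 hdvd
  obtain ⟨u, hu⟩ : p ^ v ∣ a := pow_padicValNat_dvd
  have hpu : ¬ p ∣ u := by
    intro hpu
    obtain ⟨w, hw⟩ := hpu
    have hdd : p ^ (v+1) ∣ a := ⟨w, by rw [hu, hw]; ring⟩
    rcases (padicValNat_dvd_iff (v+1) a).mp hdd with h | h
    · exact ha0 h
    · omega
  have hpb : ¬ p ∣ b := by
    intro hpb
    have h1 : p ∣ 1 := (Nat.fib_coprime_fib_succ m) ▸ Nat.dvd_gcd hpb hdvd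
    have := Nat.le_of_dvd one_pos h1
    omega
  -- the expansion
  have hexp := fib_mul_expand m p
  set t : ℕ → ℕ := fun j => p.choose j * a^j * b^(p-j) * Nat.fib j with ht_def
  have h1mem : (1 : ℕ) ∈ Finset.range (p+1) := by simp; omega
  have hsplit : Nat.fib (p * (m+1)) = t 1 + ∑ j ∈ (Finset.range (p+1)).erase 1, t j := by
    rw [hexp, ← Finset.add_sum_erase _ t h1mem]
  have ht1 : t 1 = p^(v+1) * (u * b^(p-1)) := by
    simp only [ht_def, Nat.choose_one_right, pow_one, Nat.fib_one, mul_one, hu]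
    ring
  have hS : p^(v+2) ∣ ∑ j ∈ (Finset.range (p+1)).erase 1, t j := by
    refine Finset.dvd_sum fun j hj => ?_
    have hj1 : j ≠ 1 := Finset.ne_of_mem_erase hj
    have hjp : j ≤ p := by
      have := Finset.mem_range.mp (Finset.mem_of_mem_erase hj); omega
    rcases Nat.eq_zero_or_pos j with rfl | hj0
    · simp [ht_def]
    rcases eq_or_lt_of_le hjp with hje | hjlt
    · -- j = p : p^(v+2) ∣ a^p
      have hj3 : 3 ≤ j := hje ▸ hp3
      have hle : v + 2 ≤ v * j := by nlinarith
      have : p ^ (v+2) ∣ a ^ j := by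
        calc p ^ (v+2) ∣ p ^ (v*j) := pow_dvd_pow p hle
        _ ∣ (p^v)^j := by rw [← pow_mul]
        _ ∣ a ^ j := pow_dvd_pow_of_dvd ⟨u, hu⟩ j
      exact Dvd.dvd.mul_right (Dvd.dvd.mul_right (this.mul_left _) _) _
    · -- 2 ≤ j < p
      have hj2 : 2 ≤ j := by omega
      have hch : p ∣ p.choose j := Nat.Prime.dvd_choose_self hpp (by omega) hjlt
      have hle : v + 1 ≤ v * j := by nlinarith
      have hdj : p ^ (v+1) ∣ a ^ j := by
        calc p ^ (v+1) ∣ p ^ (v*j) := pow_dvd_pow p hle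
        _ ∣ (p^v)^j := by rw [← pow_mul]
        _ ∣ a ^ j := pow_dvd_pow_of_dvd ⟨u, hu⟩ j
      have : p ^ (v+2) ∣ p.choose j * a^j := by
        rw [pow_succ, mul_comm (p^(v+1)) p]
        exact mul_dvd_mul hch hdj
      exact Dvd.dvd.mul_right (this.mul_right _) _
  have htot0 : Nat.fib (p * (m+1)) ≠ 0 := by
    have : 0 < p * (m+1) := by positivity
    have := Nat.fib_pos.mpr this
    omega
  have hdvd1 : p ^ (v+1) ∣ Nat.fib (p * (m+1)) := by
    rw [hsplit, ht1]
    exact dvd_add (Dvd.intro _ rfl) ((pow_dvd_pow p (by omega)).trans hS)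
  have hndvd : ¬ p ^ (v+2) ∣ Nat.fib (p * (m+1)) := by
    intro hd
    have ht1d : p ^ (v+2) ∣ t 1 := by
      have : t 1 = Nat.fib (p * (m+1)) - ∑ j ∈ (Finset.range (p+1)).erase 1, t j := by omega
      rw [this]
      exact Nat.dvd_sub hd hS
    rw [ht1, pow_succ] at ht1d
    have : p ∣ u * b^(p-1) := (mul_dvd_mul_iff_left (pow_pos hpp.pos (v+1)).ne').mp ht1d
    rcases hpp.dvd_mul.mp this with h | h
    · exact hpu h
    · exact hpb (hpp.dvd_of_dvd_pow h)
  refine le_antisymm ?_ ?_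
  · by_contra hlt
    push_neg at hlt
    exact hndvd ((pow_dvd_pow p (by omega)).trans pow_padicValNat_dvd)
  · rcases (padicValNat_dvd_iff (v+1) _).mp hdvd1 with h | h
    · exact absurd h htot0
    · exact h


theorem fib_p_not_dvd_abstract {p : ℕ} [hp : Fact p.Prime] (hp2 : p ≠ 2) (hp5 : p ≠ 5)
    (K : Type) [Field K] [CharP K p] (r : K) (hr : r ^ 2 = 5) :
    ¬ p ∣ Nat.fib p := by
  have hpp := hp.out
  have h2K : (2 : K) ≠ 0 := by
    rw [show (2:K) = ((2:ℕ):K) by norm_num, Ne, CharP.cast_eq_zero_iff K p 2]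
    intro hd
    rcases (Nat.prime_dvd_prime_iff_eq hpp Nat.prime_two).mp hd with rfl
    exact hp2 rfl
  have h5K : (5 : K) ≠ 0 := by
    rw [show (5:K) = ((5:ℕ):K) by norm_num, Ne, CharP.cast_eq_zero_iff K p 5]
    intro hd
    rcases (Nat.prime_dvd_prime_iff_eq hpp (by norm_num)).mp hd with rfl
    exact hp5 rfl
  set ph : K := (1 + r)/2 with hph_def
  set ps : K := (1 - r)/2 with hps_def
  have hph2 : ph^2 = ph + 1 := by
    rw [hph_def]; field_simp; linear_combination hr
  have hps2 : ps^2 = ps + 1 := by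
    rw [hps_def]; field_simp; linear_combination hr
  have ident : ∀ n : ℕ, (Nat.fib n : K) * r = ph^n - ps^n := by
    intro n
    induction n using Nat.twoStepInduction with
    | zero => simp
    | one => rw [hph_def, hps_def]; field_simp; ring
    | more n ih1 ih2 =>
        have hfib : (Nat.fib (n+2) : K) = Nat.fib n + Nat.fib (n+1) := by
          rw [Nat.fib_add_two]; push_cast; ring
        rw [hfib]
        have e1 : ph^(n+2) = ph^n * ph^2 := by ring
        have e2 : ps^(n+2) = ps^n * ps^2 := by ring
        rw [e1, e2, hph2, hps2]
        linear_combination ih1 + ih2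
  -- Frobenius facts
  let f : ZMod p →+* K := ZMod.castHom dvd_rfl K
  have h2p : (2:K)^p = 2 := by
    have : (2:K) = f 2 := (map_ofNat f 2).symm
    rw [this, ← map_pow, ZMod.pow_card]
  have h5p : (5:K)^p = 5 := by
    have : (5:K) = f 5 := (map_ofNat f 5).symm
    rw [this, ← map_pow, ZMod.pow_card]
  have hphp : ph^p - ps^p = r^p := by
    rw [hph_def, hps_def, div_pow, div_pow, add_pow_char, sub_pow_char, h2p]
    field_simp
    ring
  intro hdvd
  have hfp : (Nat.fib p : K) = 0 := (CharP.cast_eq_zero_iff K p _).mpr hdvd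
  have : r^p = 0 := by
    rw [← hphp, ← ident p, hfp, zero_mul]
  have hr0 : r = 0 := pow_eq_zero_iff (hpp.pos.ne') |>.mp this
  rw [hr0] at hr
  simp at hr
  exact h5K hr.symm


theorem exists_sqrt5 {p : ℕ} [hp : Fact p.Prime] (hp2 : p ≠ 2) (hp5 : p ≠ 5) :
    ∃ r : GaloisField p 2, r ^ 2 = 5 := by
  have hpp := hp.out
  letI : Fintype (GaloisField p 2) := Fintype.ofFinite _
  have hcard : Fintype.card (GaloisField p 2) = p ^ 2 := by
    rw [← Nat.card_eq_fintype_card, GaloisField.card p 2 (by norm_num)]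
  have hchar : ringChar (GaloisField p 2) = p := ringChar.eq _ p
  have h5z : (5 : ZMod p) ≠ 0 := by
    rw [show (5:ZMod p) = ((5:ℕ):ZMod p) by norm_num, Ne, ZMod.natCast_eq_zero_iff]
    intro hd
    exact hp5 ((Nat.prime_dvd_prime_iff_eq hpp (by norm_num)).mp hd)
  let f : ZMod p →+* GaloisField p 2 := ZMod.castHom dvd_rfl _
  have h5f : (5 : GaloisField p 2) = f 5 := (map_ofNat f 5).symm
  have h5 : (5 : GaloisField p 2) ≠ 0 := by
    rw [h5f, Ne, map_eq_zero_iff f (RingHom.injective f)]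
    exact h5z
  have hsq : IsSquare (5 : GaloisField p 2) := by
    rw [FiniteField.isSquare_iff (by rw [hchar]; exact hp2) h5, hcard]
    obtain ⟨t, ht⟩ : ∃ t, p = 2*t+1 := hpp.odd_of_ne_two hp2
    have hdiv : p^2/2 = (p-1)*(t+1) := by
      have hp1 : p - 1 = 2*t := by omega
      have h1 : p^2 = 2*((p-1)*(t+1)) + 1 := by rw [hp1, ht]; ring
      omega
    rw [hdiv]
    have hfe : (5 : ZMod p)^(p-1) = 1 := ZMod.pow_card_sub_one_eq_one h5z
    rw [h5f, pow_mul, ← map_pow, hfe, _root_.map_one, one_pow]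
  obtain ⟨r, hr⟩ := hsq
  exact ⟨r, by rw [sq]; exact hr.symm⟩

theorem fib_p_not_dvd {p : ℕ} [hp : Fact p.Prime] (hp2 : p ≠ 2) (hp5 : p ≠ 5) :
    ¬ p ∣ Nat.fib p := by
  obtain ⟨r, hr⟩ := exists_sqrt5 hp2 hp5
  exact fib_p_not_dvd_abstract hp2 hp5 (GaloisField p 2) r hr

-- mod p reduction of the expansion
theorem fib_mul_p_modp {p : ℕ} [hp : Fact p.Prime] (β : ℕ) :
    (Nat.fib (p * (β+1)) : ZMod p) = (Nat.fib (β+1) : ZMod p)^p * Nat.fib p := by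
  have hpp := hp.out
  have h := fib_mul_expand β p
  have h2 : ((Nat.fib (p * (β+1)) : ℕ) : ZMod p)
      = ∑ j ∈ Finset.range (p+1),
        ((p.choose j : ZMod p) * (Nat.fib (β+1) : ZMod p)^j *
          (Nat.fib β : ZMod p)^(p-j) * (Nat.fib j : ZMod p)) := by
    rw [h]
    push_cast
    rfl
  rw [h2]
  rw [Finset.sum_eq_single p]
  · simp
  · intro j hj hjp
    rcases Nat.eq_zero_or_pos j with rfl | hj0
    · simp
    · have hjlt : j < p := by have := Finset.mem_range.mp hj; omega
      have : (p.choose j : ZMod p) = 0 := by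
        rw [show ((p.choose j : ℕ) : ZMod p) = 0 ↔ (p:ℕ) ∣ p.choose j from
          ZMod.natCast_eq_zero_iff _ p]
        exact Nat.Prime.dvd_choose_self hpp (by omega) hjlt
      rw [this]; ring
  · intro hmem
    simp at hmem

section Main
variable {p : ℕ} [hp : Fact p.Prime]

/-- The restricted period (rank of apparition) of the Fibonacci sequence modulo `p`:
the least positive `n` such that `p ∣ F n`. -/
noncomputable def fibAlpha (p : ℕ) : ℕ := sInf {n | 0 < n ∧ p ∣ Nat.fib n}

theorem fibAlpha_spec (hne : {n | 0 < n ∧ p ∣ Nat.fib n}.Nonempty) :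
    0 < fibAlpha p ∧ p ∣ Nat.fib (fibAlpha p) := Nat.sInf_mem hne

theorem fib_rank_dvd_iff (hne : {n | 0 < n ∧ p ∣ Nat.fib n}.Nonempty) (n : ℕ) :
    p ∣ Nat.fib n ↔ fibAlpha p ∣ n := by
  obtain ⟨hα0, hαd⟩ := fibAlpha_spec hne
  constructor
  · intro hd
    rcases Nat.eq_zero_or_pos n with rfl | hn0
    · exact Dvd.intro 0 rfl
    · have hgcd : p ∣ Nat.fib (Nat.gcd n (fibAlpha p)) := by
        rw [Nat.fib_gcd]
        exact Nat.dvd_gcd hd hαd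
      have hg0 : 0 < Nat.gcd n (fibAlpha p) := Nat.gcd_pos_of_pos_left _ hn0
      have hle : fibAlpha p ≤ Nat.gcd n (fibAlpha p) := Nat.sInf_le ⟨hg0, hgcd⟩
      have hge : Nat.gcd n (fibAlpha p) ∣ fibAlpha p := Nat.gcd_dvd_right _ _
      have hle2 := Nat.le_of_dvd hα0 hge
      have heq : Nat.gcd n (fibAlpha p) = fibAlpha p := by omega
      rw [← heq]
      exact Nat.gcd_dvd_left _ _
  · intro hd
    exact dvd_trans hαd (Nat.fib_dvd _ _ hd)

theorem fibAlpha_not_dvd_p (hp2 : p ≠ 2) (hp5 : p ≠ 5)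
    (hne : {n | 0 < n ∧ p ∣ Nat.fib n}.Nonempty) : ¬ p ∣ fibAlpha p := by
  obtain ⟨hα0, hαd⟩ := fibAlpha_spec hne
  intro hd
  obtain ⟨β, hβ⟩ := hd
  have hβ0 : 0 < β := by
    rcases Nat.eq_zero_or_pos β with rfl | h
    · simp [hβ] at hα0
    · exact h
  obtain ⟨β', rfl⟩ : ∃ β', β = β' + 1 := ⟨β - 1, by omega⟩
  have hmod := fib_mul_p_modp (p := p) β'
  have hz : ((Nat.fib (fibAlpha p) : ℕ) : ZMod p) = 0 :=
    (ZMod.natCast_eq_zero_iff _ p).mpr hαd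
  rw [hβ] at hz
  rw [hmod] at hz
  rcases mul_eq_zero.mp hz with h1 | h1
  · have : ((Nat.fib (β'+1) : ℕ) : ZMod p) = 0 := pow_eq_zero_iff (hp.out.pos.ne') |>.mp h1
    have hdvdβ : p ∣ Nat.fib (β'+1) := (ZMod.natCast_eq_zero_iff _ p).mp this
    have : fibAlpha p ∣ β' + 1 := (fib_rank_dvd_iff hne _).mp hdvdβ
    have hle := Nat.le_of_dvd (by omega) this
    have : β' + 1 < fibAlpha p := by
      rw [hβ]
      have := hp.out.two_le
      nlinarith
    omega
  · exact fib_p_not_dvd hp2 hp5 ((ZMod.natCast_eq_zero_iff _ p).mp h1)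

theorem fib_val_coprime (hp2 : p ≠ 2) (m k : ℕ) (hk0 : 0 < k) (hpk : ¬ p ∣ k)
    (hdvd : p ∣ Nat.fib (m+1)) :
    padicValNat p (Nat.fib (k*(m+1))) = padicValNat p (Nat.fib (m+1)) := by
  have hpp := hp.out
  set a := Nat.fib (m+1) with ha_def
  set b := Nat.fib m with hb_def
  set v := padicValNat p a with hv_def
  have ha0 : a ≠ 0 := by have := Nat.fib_pos.mpr (by omega : 0 < m+1); omega
  have hv1 : 1 ≤ v := one_le_padicValNat_of_dvd ha0 hdvd
  obtain ⟨u, hu⟩ : p ^ v ∣ a := pow_padicValNat_dvd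
  have hpu : ¬ p ∣ u := by
    intro hpu
    obtain ⟨w, hw⟩ := hpu
    have hdd : p ^ (v+1) ∣ a := ⟨w, by rw [hu, hw]; ring⟩
    rcases (padicValNat_dvd_iff (v+1) a).mp hdd with h | h
    · exact ha0 h
    · omega
  have hpb : ¬ p ∣ b := by
    intro hpb
    have h1 : p ∣ 1 := (Nat.fib_coprime_fib_succ m) ▸ Nat.dvd_gcd hpb hdvd
    have := Nat.le_of_dvd one_pos h1
    have := hpp.two_le
    omega
  have hexp := fib_mul_expand m k
  set t : ℕ → ℕ := fun j => k.choose j * a^j * b^(k-j) * Nat.fib j with ht_def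
  have h1mem : (1 : ℕ) ∈ Finset.range (k+1) := by simp; omega
  have hsplit : Nat.fib (k * (m+1)) = t 1 + ∑ j ∈ (Finset.range (k+1)).erase 1, t j := by
    rw [hexp, ← Finset.add_sum_erase _ t h1mem]
  have ht1 : t 1 = p^v * (k * u * b^(k-1)) := by
    simp only [ht_def, Nat.choose_one_right, pow_one, Nat.fib_one, mul_one, hu]
    ring
  have hS : p^(v+1) ∣ ∑ j ∈ (Finset.range (k+1)).erase 1, t j := by
    refine Finset.dvd_sum fun j hj => ?_
    have hj1 : j ≠ 1 := Finset.ne_of_mem_erase hj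
    rcases Nat.eq_zero_or_pos j with rfl | hj0
    · simp [ht_def]
    have hj2 : 2 ≤ j := by omega
    have hle : v + 1 ≤ v * j := by nlinarith
    have hdj : p ^ (v+1) ∣ a ^ j := by
      calc p ^ (v+1) ∣ p ^ (v*j) := pow_dvd_pow p hle
      _ ∣ (p^v)^j := by rw [← pow_mul]
      _ ∣ a ^ j := pow_dvd_pow_of_dvd ⟨u, hu⟩ j
    exact Dvd.dvd.mul_right ((hdj.mul_left _).mul_right _) _
  have htot0 : Nat.fib (k * (m+1)) ≠ 0 := by
    have h0 : 0 < k * (m+1) := by positivity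
    have := Nat.fib_pos.mpr h0
    omega
  have hdvd1 : p ^ v ∣ Nat.fib (k * (m+1)) := by
    rw [hsplit, ht1]
    exact dvd_add (Dvd.intro _ rfl) ((pow_dvd_pow p (by omega)).trans hS)
  have hndvd : ¬ p ^ (v+1) ∣ Nat.fib (k * (m+1)) := by
    intro hd
    have ht1d : p ^ (v+1) ∣ t 1 := by
      have he : t 1 = Nat.fib (k * (m+1)) - ∑ j ∈ (Finset.range (k+1)).erase 1, t j := by omega
      rw [he]
      exact Nat.dvd_sub hd hS
    rw [ht1] at ht1d
    obtain ⟨c, hc⟩ := ht1d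
    have hcancel : k * u * b^(k-1) = p * c := by
      have hpv : 0 < p ^ v := pow_pos hpp.pos v
      have heq2 : p ^ v * (k * u * b^(k-1)) = p ^ v * (p * c) := by
        rw [hc]; ring
      exact Nat.eq_of_mul_eq_mul_left hpv heq2
    have hcc : p ∣ k * u * b ^ (k-1) := ⟨c, hcancel⟩
    rcases hpp.dvd_mul.mp hcc with h | h
    · rcases hpp.dvd_mul.mp h with h' | h'
      · exact hpk h'
      · exact hpu h'
    · exact hpb (hpp.dvd_of_dvd_pow h)
  refine le_antisymm ?_ ?_
  · by_contra hlt
    push_neg at hlt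
    exact hndvd ((pow_dvd_pow p (by omega)).trans pow_padicValNat_dvd)
  · rcases (padicValNat_dvd_iff v _).mp hdvd1 with h | h
    · exact absurd h htot0
    · exact h

theorem fib_val_mul (hp2 : p ≠ 2) (m : ℕ) (hdvd : p ∣ Nat.fib (m+1)) :
    ∀ k, 0 < k →
      padicValNat p (Nat.fib (k*(m+1))) = padicValNat p (Nat.fib (m+1)) + padicValNat p k := by
  have hpp := hp.out
  intro k
  induction k using Nat.strong_induction_on with
  | _ k ih =>
    intro hk0
    by_cases hpk : p ∣ k
    · obtain ⟨k', rfl⟩ := hpk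
      have hk'0 : 0 < k' := Nat.pos_of_ne_zero (by rintro rfl; simp at hk0)
      have hM1 : k'*(m+1) = (k'*(m+1) - 1) + 1 := by
        have : 1 ≤ k'*(m+1) := Nat.one_le_iff_ne_zero.mpr (by positivity)
        omega
      have harr : p*k'*(m+1) = p*((k'*(m+1) - 1) + 1) := by rw [← hM1]; ring
      have hdvd' : p ∣ Nat.fib ((k'*(m+1) - 1) + 1) := by
        rw [← hM1]
        exact dvd_trans hdvd (Nat.fib_dvd _ _ ⟨k', mul_comm _ _⟩)
      have hk'lt : k' < p * k' := by nlinarith [hpp.two_le]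
      have hih := ih k' hk'lt hk'0
      have hvk : padicValNat p (p * k') = 1 + padicValNat p k' := by
        rw [padicValNat.mul (by have := hpp.pos; omega) (by omega), padicValNat.self hpp.one_lt]
      rw [harr, fib_lte hp2 _ hdvd', ← hM1, hih, hvk]
      ring
    · rw [padicValNat.eq_zero_of_not_dvd hpk, add_zero]
      exact fib_val_coprime hp2 m k hk0 hpk hdvd
end Main

section Main2
variable {p : ℕ} [hp : Fact p.Prime]

theorem fib_val_formula (hp2 : p ≠ 2) (hp5 : p ≠ 5)
    (hne : {n | 0 < n ∧ p ∣ Nat.fib n}.Nonempty)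
    (hwall : padicValNat p (Nat.fib (fibAlpha p)) = 1)
    (m : ℕ) (hm : 0 < m) :
    padicValNat p (Nat.fib m) =
      if fibAlpha p ∣ m then padicValNat p m + 1 else 0 := by
  obtain ⟨hα0, hαd⟩ := fibAlpha_spec hne
  have hpα := fibAlpha_not_dvd_p hp2 hp5 hne
  by_cases hd : fibAlpha p ∣ m
  · rw [if_pos hd]
    obtain ⟨k, rfl⟩ := hd
    have hk0 : 0 < k := Nat.pos_of_ne_zero (by rintro rfl; simp at hm)
    have hA : fibAlpha p = (fibAlpha p - 1) + 1 := by omega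
    have hdvd' : p ∣ Nat.fib ((fibAlpha p - 1) + 1) := by rw [← hA]; exact hαd
    have h1 : fibAlpha p * k = k * ((fibAlpha p - 1) + 1) := by rw [← hA]; ring
    rw [h1, fib_val_mul hp2 _ hdvd' k hk0, ← hA, hwall]
    rw [padicValNat.mul (by omega) (by omega), padicValNat.eq_zero_of_not_dvd hpα]
    ring
  · rw [if_neg hd, padicValNat.eq_zero_of_not_dvd]
    intro hpd
    exact hd ((fib_rank_dvd_iff hne m).mp hpd)

end Main2

theorem nup_fib_last_digit_2_3 (p : ℕ) (hp : p.Prime) (hp2 : p ≠ 2)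
    (h : p % 5 = 2 ∨ p % 5 = 3)
    (hwall : padicValNat p (Nat.fib (fibAlpha p)) = 1) (n : ℕ) :
    (∀ i ≤ p - 2,
      padicValNat p (Nat.fib (p * (p * n + i) + p)) =
        2 * padicValNat p (Nat.fib (p * n + i + 1))) ∧
    (padicValNat p (Nat.fib (p ^ 2 * (n + 1))) +
        padicValNat p (Nat.fib (n + 1)) =
      2 * padicValNat p (Nat.fib (p * (n + 1)))) := by
  haveI : Fact p.Prime := ⟨hp⟩
  have hp5 : p ≠ 5 := by rintro rfl; omega
  have hp3 : 3 ≤ p := by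
    have h2 := hp.two_le
    rcases Nat.lt_or_ge p 3 with hlt | hge
    · interval_cases p <;> simp_all
    · exact hge
  have hne : {k | 0 < k ∧ p ∣ Nat.fib k}.Nonempty := by
    by_contra hne
    rw [Set.not_nonempty_iff_eq_empty] at hne
    have h0 : fibAlpha p = 0 := by rw [fibAlpha, hne]; simp
    rw [h0] at hwall
    simp [Nat.fib_zero] at hwall
  obtain ⟨hα0, hαd⟩ := fibAlpha_spec hne
  have hpα := fibAlpha_not_dvd_p hp2 hp5 hne
  have hcop : Nat.Coprime (fibAlpha p) p :=
    ((Nat.Prime.coprime_iff_not_dvd hp).mpr hpα).symm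
  have hform := fib_val_formula hp2 hp5 hne hwall
  constructor
  · intro i hi
    set m := p*n+i+1 with hm_def
    have hm0 : 0 < m := by omega
    have hpm : ¬ p ∣ m := by
      intro hd
      have h1 : p ∣ i+1 := by
        have hpn : p ∣ p*n := ⟨n, rfl⟩
        have : p*n + i + 1 = p*n + (i+1) := by ring
        rw [hm_def, this] at hd
        exact (Nat.dvd_add_right hpn).mp hd
      have := Nat.le_of_dvd (by omega) h1
      omega
    have hvm : padicValNat p m = 0 := padicValNat.eq_zero_of_not_dvd hpm
    have hidx : p * (p*n+i) + p = p * m := by rw [hm_def]; ring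
    rw [hidx, hform (p*m) (by positivity), hform m hm0]
    by_cases hd : fibAlpha p ∣ m
    · rw [if_pos hd, if_pos (hd.mul_left p)]
      rw [padicValNat.mul (by omega) (by omega), padicValNat.self hp.one_lt, hvm]
    · rw [if_neg hd, if_neg (fun hc => hd (hcop.dvd_of_dvd_mul_left hc))]
  · set m := n+1 with hm_def
    have hm0 : 0 < m := by omega
    rw [hform (p^2*m) (by positivity), hform (p*m) (by positivity), hform m hm0]
    by_cases hd : fibAlpha p ∣ m
    · rw [if_pos hd, if_pos (hd.mul_left (p^2)), if_pos (hd.mul_left p)]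
      rw [padicValNat.mul (a := p^2) (by positivity) (by omega),
        padicValNat.mul (a := p) (by omega) (by omega),
        padicValNat.prime_pow, padicValNat.self hp.one_lt]
      ring
    · rw [if_neg hd,
        if_neg (fun hc => hd ((hcop.pow_right 2).dvd_of_dvd_mul_left hc)),
        if_neg (fun hc => hd (hcop.dvd_of_dvd_mul_left hc))]
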